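/- (Spectral Theorem) Let (θ, Φ) be an ergodic linear random dynamical system on ℝ^d with dichotomy spectrum Σ ⊆ [−∞, +∞]. Then there exist n ∈ {1, …, d} and extended reals −∞ ≤ a₁ ≤ b₁ < a₂ ≤ b₂ < … < a_n ≤ b_n ≤ +∞ such that Σ = [a₁, b₁] ∪ [a₂, b₂] ∪ … ∪ [a_n, b_n], where intervals with infinite endpoints are understood in [−∞, +∞]: [−∞, a] = {−∞} ∪ (−∞, a], [a, +∞] = [a, ∞) ∪ {+∞}, [−∞, −∞] = {−∞}, [+∞, +∞] = {+∞}, and [−∞, +∞] is the whole extended real line. -/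

import Mathlib

open MeasureTheory Filter

noncomputable section

/-- A linear random dynamical system `(θ, Φ)` on `ℝ^d` over the probability space `(Ω, 𝓕, ℙ)`:
`θ` is a measure-preserving measurable dynamical system on `Ω`, and `Φ` is a measurable
cocycle over `θ` taking values in the invertible continuous linear maps of `ℝ^d`. -/
structure LinRDS {Ω : Type*} [MeasurableSpace Ω] (ℙ : Measure Ω) (d : ℕ) where
  θ : ℝ → Ω → Ω
  Φ : ℝ → Ω → EuclideanSpace ℝ (Fin d) →L[ℝ] EuclideanSpace ℝ (Fin d)
  θ_meas : Measurable fun p : ℝ × Ω => θ p.1 p.2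
  θ_zero : ∀ ω, θ 0 ω = ω
  θ_add : ∀ t s ω, θ (t + s) ω = θ t (θ s ω)
  θ_pres : ∀ t, MeasurePreserving (θ t) ℙ ℙ
  Φ_meas : ∀ x, Measurable fun p : ℝ × Ω => Φ p.1 p.2 x
  Φ_zero : ∀ ω, Φ 0 ω = 1
  Φ_cocycle : ∀ t s ω, Φ (t + s) ω = Φ t (θ s ω) * Φ s ω
  Φ_isUnit : ∀ t ω, IsUnit (Φ t ω)

variable {Ω : Type*} [MeasurableSpace Ω] {ℙ : Measure Ω} {d : ℕ}

/-- The base of the linear random dynamical system is ergodic. -/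
def LinRDS.IsErgodic (S : LinRDS ℙ d) : Prop :=
  ∀ A : Set Ω, MeasurableSet A → (∀ t, S.θ t ⁻¹' A = A) → ℙ A = 0 ∨ ℙ A = 1

/-- An invariant projector of a linear random dynamical system. -/
def LinRDS.InvProjector (S : LinRDS ℙ d)
    (P : Ω → EuclideanSpace ℝ (Fin d) →L[ℝ] EuclideanSpace ℝ (Fin d)) : Prop :=
  (∀ x, Measurable fun ω => P ω x) ∧ (∀ ω, P ω * P ω = P ω) ∧
    ∀ t ω, P (S.θ t ω) * S.Φ t ω = S.Φ t ω * P ω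

/-- `(θ, Φ)` admits an exponential dichotomy with growth rate `γ` and invariant projector `P`. -/
def LinRDS.IsED (S : LinRDS ℙ d) (γ : ℝ)
    (P : Ω → EuclideanSpace ℝ (Fin d) →L[ℝ] EuclideanSpace ℝ (Fin d)) : Prop :=
  S.InvProjector P ∧ ∃ a > (0:ℝ), ∃ K ≥ (1:ℝ), ∀ᵐ ω ∂ℙ,
    (∀ t : ℝ, 0 ≤ t → ‖S.Φ t ω * P ω‖ ≤ K * Real.exp ((γ - a) * t)) ∧
    (∀ t : ℝ, t ≤ 0 → ‖S.Φ t ω * (1 - P ω)‖ ≤ K * Real.exp ((γ + a) * t))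

/-- `(θ, Φ)` admits an exponential dichotomy with real growth rate `γ`. -/
def LinRDS.AdmitsED (S : LinRDS ℙ d) (γ : ℝ) : Prop :=
  ∃ P, S.IsED γ P

/-- `(θ, Φ)` admits an exponential dichotomy with extended-real growth rate `γ`; for
`γ = ±∞` this means an exponential dichotomy with some real growth rate whose projector
is a.s. the identity (resp. a.s. zero). -/
def LinRDS.AdmitsEDE (S : LinRDS ℙ d) (γ : EReal) : Prop :=
  (∃ g : ℝ, γ = (g : EReal) ∧ S.AdmitsED g) ∨
  (γ = ⊤ ∧ ∃ g : ℝ, ∃ P, S.IsED g P ∧ ∀ᵐ ω ∂ℙ, P ω = 1) ∨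
  (γ = ⊥ ∧ ∃ g : ℝ, ∃ P, S.IsED g P ∧ ∀ᵐ ω ∂ℙ, P ω = 0)

/-- The dichotomy spectrum of `(θ, Φ)`, a subset of the extended real line. -/
def LinRDS.spectrum (S : LinRDS ℙ d) : Set EReal :=
  {γ | ¬ S.AdmitsEDE γ}

/-- The rank of a continuous linear map on `ℝ^d`. -/
def clmRank (P : EuclideanSpace ℝ (Fin d) →L[ℝ] EuclideanSpace ℝ (Fin d)) : ℕ :=
  Module.finrank ℝ (LinearMap.range
    (P : EuclideanSpace ℝ (Fin d) →ₗ[ℝ] EuclideanSpace ℝ (Fin d)))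


variable {d : ℕ}
local notation "E" => EuclideanSpace ℝ (Fin d)

namespace SpecAux

lemma coe_mul (p q : E →L[ℝ] E) :
    ((p * q : E →L[ℝ] E) : E →ₗ[ℝ] E) = (p : E →ₗ[ℝ] E) ∘ₗ (q : E →ₗ[ℝ] E) := rfl

lemma clmRank_le (p : E →L[ℝ] E) : clmRank p ≤ d := by
  have h := Submodule.finrank_le (LinearMap.range (p : E →ₗ[ℝ] E))
  simpa [clmRank, finrank_euclideanSpace] using h

lemma clmRank_mul_le_right (p q : E →L[ℝ] E) : clmRank (p * q) ≤ clmRank q := by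
  rw [clmRank, clmRank, coe_mul, LinearMap.range_comp]
  exact Submodule.finrank_map_le _ _

lemma clmRank_mul_le_left (p q : E →L[ℝ] E) : clmRank (p * q) ≤ clmRank p := by
  rw [clmRank, clmRank, coe_mul]
  exact Submodule.finrank_mono (LinearMap.range_comp_le_range _ _)

/-- rank is invariant under conjugation by an invertible map. -/
lemma clmRank_conj {u v p : E →L[ℝ] E} (huv : u * v = 1) (hvu : v * u = 1) :
    clmRank (u * p * v) = clmRank p := by
  apply le_antisymm
  · exact le_trans (clmRank_mul_le_left _ _)
      (le_trans (clmRank_mul_le_right u p) le_rfl)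
  · have : p = v * (u * p * v) * u := by
      have h : v * (u * p * v) * u = (v * u) * p * (v * u) := by
        simp only [mul_assoc]
      rw [h, hvu, one_mul, mul_one]
    calc clmRank p = clmRank (v * (u * p * v) * u) := by rw [← this]
    _ ≤ clmRank (v * (u * p * v)) := clmRank_mul_le_left _ _
    _ ≤ clmRank (u * p * v) := clmRank_mul_le_right _ _

lemma mem_range_fixed {p : E →L[ℝ] E} (hp : p * p = p) {x : E}
    (hx : x ∈ LinearMap.range (p : E →ₗ[ℝ] E)) : p x = x := by
  obtain ⟨y, rfl⟩ := hx
  have := congrArg (fun f : E →L[ℝ] E => f y) hp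
  simpa using this

lemma proj_eq_of_rank_eq {p q : E →L[ℝ] E} (hp : p * p = p) (hq : q * q = q)
    (h1 : q * p = p) (h2 : p * q = p) (hr : clmRank p = clmRank q) : p = q := by
  have hle : LinearMap.range (p : E →ₗ[ℝ] E) ≤ LinearMap.range (q : E →ₗ[ℝ] E) := by
    rintro x ⟨y, rfl⟩
    refine ⟨p y, ?_⟩
    have := congrArg (fun f : E →L[ℝ] E => f y) h1
    simpa using this
  have heq : LinearMap.range (p : E →ₗ[ℝ] E) = LinearMap.range (q : E →ₗ[ℝ] E) :=
    Submodule.eq_of_le_of_finrank_eq hle hr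
  ext x
  have hqx : q x ∈ LinearMap.range (p : E →ₗ[ℝ] E) := heq ▸ LinearMap.mem_range_self _ x
  have h3 : p (q x) = q x := mem_range_fixed hp hqx
  have h4 : p (q x) = p x := by
    have := congrArg (fun f : E →L[ℝ] E => f x) h2
    simpa using this
  rw [← h3, h4]

lemma proj_zero_of_rank_zero {p : E →L[ℝ] E} (hr : clmRank p = 0) : p = 0 := by
  have : LinearMap.range (p : E →ₗ[ℝ] E) = ⊥ := Submodule.finrank_eq_zero.mp hr
  ext x
  have h2 : p x ∈ (⊥ : Submodule ℝ E) := this ▸ LinearMap.mem_range_self (p : E →ₗ[ℝ] E) x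
  have h3 : p x = 0 := by simpa using h2
  simp [h3]

lemma proj_one_of_rank_d {p : E →L[ℝ] E} (hp : p * p = p) (hr : clmRank p = d) : p = 1 := by
  have : LinearMap.range (p : E →ₗ[ℝ] E) = ⊤ := by
    apply Submodule.eq_top_of_finrank_eq
    have : clmRank p = Module.finrank ℝ E := by rw [hr, finrank_euclideanSpace]; simp
    exact this
  ext x
  have hx : x ∈ LinearMap.range (p : E →ₗ[ℝ] E) := this ▸ Submodule.mem_top
  have h3 : p x = x := mem_range_fixed hp hx
  simp [h3]

/-- the trace of an idempotent equals its rank. -/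
lemma trace_idem {p : E →L[ℝ] E} (hp : p * p = p) :
    LinearMap.trace ℝ E (p : E →ₗ[ℝ] E) = (clmRank p : ℝ) := by
  have hproj : LinearMap.IsProj (LinearMap.range (p : E →ₗ[ℝ] E)) (p : E →ₗ[ℝ] E) := by
    constructor
    · intro x; exact LinearMap.mem_range_self _ x
    · intro x hx; exact mem_range_fixed hp hx
  rw [hproj.trace]
  rfl

/-- trace as an explicit sum of matrix entries, for measurability. -/
lemma trace_eq_sum (f : E →L[ℝ] E) :
    LinearMap.trace ℝ E (f : E →ₗ[ℝ] E)
      = ∑ i : Fin d, f ((EuclideanSpace.basisFun (Fin d) ℝ).toBasis i) i := by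
  rw [LinearMap.trace_eq_matrix_trace ℝ (EuclideanSpace.basisFun (Fin d) ℝ).toBasis]
  rw [Matrix.trace]
  congr 1
  ext i
  rw [Matrix.diag]
  rw [LinearMap.toMatrix_apply]
  simp [EuclideanSpace.basisFun, OrthonormalBasis.coe_toBasis_repr_apply]

end SpecAux
namespace SpecAux

variable {Ω : Type*} [MeasurableSpace Ω] {ℙ : Measure Ω}

section System
variable (S : LinRDS ℙ d)

lemma theta_inv (t : ℝ) (ω : Ω) : S.θ (-t) (S.θ t ω) = ω := by
  rw [← S.θ_add]; simp [S.θ_zero]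

lemma theta_inv' (t : ℝ) (ω : Ω) : S.θ t (S.θ (-t) ω) = ω := by
  have h := theta_inv S (-t) ω; rwa [neg_neg] at h

lemma Phi_inv_left (t : ℝ) (ω : Ω) : S.Φ (-t) (S.θ t ω) * S.Φ t ω = 1 := by
  have h := S.Φ_cocycle (-t) t ω
  rw [neg_add_cancel, S.Φ_zero] at h
  exact h.symm

lemma Phi_inv_right (t : ℝ) (ω : Ω) : S.Φ t ω * S.Φ (-t) (S.θ t ω) = 1 := by
  have h := S.Φ_cocycle t (-t) (S.θ t ω)
  rw [add_neg_cancel, S.Φ_zero, theta_inv S t ω] at h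
  exact h.symm

lemma invProj_comm {P : Ω → E →L[ℝ] E} (hP : S.InvProjector P) (t : ℝ) (ω : Ω) :
    P ω * S.Φ (-t) (S.θ t ω) = S.Φ (-t) (S.θ t ω) * P (S.θ t ω) := by
  have h := hP.2.2 (-t) (S.θ t ω)
  rwa [theta_inv] at h

lemma invProj_comm' {P : Ω → E →L[ℝ] E} (hP : S.InvProjector P) (t : ℝ) (ω : Ω) :
    (1 - P ω) * S.Φ (-t) (S.θ t ω) = S.Φ (-t) (S.θ t ω) * (1 - P (S.θ t ω)) := by
  rw [sub_mul, mul_sub, one_mul, mul_one, invProj_comm S hP]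

/-- pull back an a.e. property along all rational time shifts -/
lemma ae_shift {p : Ω → Prop} (h : ∀ᵐ ω ∂ℙ, p ω) :
    ∀ᵐ ω ∂ℙ, ∀ q : ℚ, p (S.θ (q : ℝ) ω) := by
  rw [MeasureTheory.ae_all_iff]
  intro q
  exact ((S.θ_pres (q : ℝ)).quasiMeasurePreserving).tendsto_ae.eventually h

/-- conjugation formula for an invariant projector -/
lemma invProj_conj {P : Ω → E →L[ℝ] E} (hP : S.InvProjector P) (t : ℝ) (ω : Ω) :
    P (S.θ t ω) = S.Φ t ω * P ω * S.Φ (-t) (S.θ t ω) := by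
  have h : P (S.θ t ω) * (S.Φ t ω * S.Φ (-t) (S.θ t ω)) = S.Φ t ω * P ω * S.Φ (-t) (S.θ t ω) := by
    rw [← mul_assoc, hP.2.2 t ω]
  rwa [Phi_inv_right, mul_one] at h

lemma clmRank_invProj_shift {P : Ω → E →L[ℝ] E} (hP : S.InvProjector P) (t : ℝ) (ω : Ω) :
    clmRank (P (S.θ t ω)) = clmRank (P ω) := by
  rw [invProj_conj S hP t ω]
  exact clmRank_conj (Phi_inv_right S t ω) (Phi_inv_left S t ω)

end System

section Erg
variable [IsProbabilityMeasure ℙ] (S : LinRDS ℙ d)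

lemma measurable_trace {P : Ω → E →L[ℝ] E} (hmeas : ∀ x, Measurable fun ω => P ω x) :
    Measurable fun ω => LinearMap.trace ℝ E ((P ω : E →ₗ[ℝ] E)) := by
  have : (fun ω => LinearMap.trace ℝ E ((P ω : E →ₗ[ℝ] E)))
      = fun ω => ∑ i : Fin d, (EuclideanSpace.proj i) (P ω ((EuclideanSpace.basisFun (Fin d) ℝ).toBasis i)) := by
    funext ω
    rw [trace_eq_sum]
    rfl
  rw [this]
  exact Finset.measurable_sum _ fun i _ =>
    ((EuclideanSpace.proj i).continuous.measurable).comp (hmeas _)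

lemma measurableSet_rank_eq {P : Ω → E →L[ℝ] E} (hP : S.InvProjector P) (k : ℕ) :
    MeasurableSet {ω | clmRank (P ω) = k} := by
  have h : {ω | clmRank (P ω) = k}
      = (fun ω => LinearMap.trace ℝ E ((P ω : E →ₗ[ℝ] E))) ⁻¹' {(k : ℝ)} := by
    ext ω
    simp only [Set.mem_setOf_eq, Set.mem_preimage, Set.mem_singleton_iff]
    rw [trace_idem (hP.2.1 ω)]
    exact_mod_cast Iff.rfl
  rw [h]
  exact (measurable_trace hP.1) (measurableSet_singleton _)

lemma exists_ae_rank (hErg : S.IsErgodic) {P : Ω → E →L[ℝ] E} (hP : S.InvProjector P) :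
    ∃ k ≤ d, ∀ᵐ ω ∂ℙ, clmRank (P ω) = k := by
  set A : ℕ → Set Ω := fun k => {ω | clmRank (P ω) = k} with hA
  have hmeas : ∀ k, MeasurableSet (A k) := fun k => measurableSet_rank_eq S hP k
  have hinv : ∀ k, ∀ t, S.θ t ⁻¹' (A k) = A k := by
    intro k t
    ext ω
    simp only [hA, Set.mem_preimage, Set.mem_setOf_eq]
    rw [clmRank_invProj_shift S hP]
  have h01 : ∀ k, ℙ (A k) = 0 ∨ ℙ (A k) = 1 := fun k => hErg (A k) (hmeas k) (hinv k)
  have hcover : Set.univ ⊆ ⋃ k ∈ Finset.range (d + 1), A k := by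
    intro ω _
    simp only [Set.mem_iUnion]
    exact ⟨clmRank (P ω), by
      simp only [Finset.mem_range]
      exact ⟨Nat.lt_succ_of_le (clmRank_le _), rfl⟩⟩
  have hex : ∃ k ∈ Finset.range (d + 1), ℙ (A k) = 1 := by
    by_contra hcon
    push_neg at hcon
    have hzero : ∀ k ∈ Finset.range (d + 1), ℙ (A k) = 0 := by
      intro k hk
      rcases h01 k with h | h
      · exact h
      · exact absurd h (hcon k hk)
    have : ℙ (⋃ k ∈ Finset.range (d + 1), A k) = 0 := by
      refine le_antisymm ?_ zero_le
      calc ℙ (⋃ k ∈ Finset.range (d + 1), A k) ≤ ∑ k ∈ Finset.range (d + 1), ℙ (A k) :=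
        measure_biUnion_finset_le _ _
      _ = 0 := Finset.sum_eq_zero hzero
    have h1 : ℙ Set.univ = 0 := le_antisymm (this ▸ measure_mono hcover) zero_le
    simp at h1
  obtain ⟨k, hk, hk1⟩ := hex
  refine ⟨k, Nat.lt_succ_iff.mp (Finset.mem_range.mp hk), ?_⟩
  have := (MeasureTheory.prob_compl_eq_zero_iff (hmeas k)).mpr hk1
  rw [MeasureTheory.ae_iff]
  exact this

end Erg

end SpecAux
namespace SpecAux
variable {Ω : Type*} [MeasurableSpace Ω] {ℙ : Measure Ω}

section Compare
variable (S : LinRDS ℙ d)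

lemma Phi_inv_left' (t : ℝ) (ω : Ω) : S.Φ t (S.θ (-t) ω) * S.Φ (-t) ω = 1 := by
  have h := Phi_inv_left S (-t) ω; rwa [neg_neg] at h

lemma invProj_comm₂ {P : Ω → E →L[ℝ] E} (hP : S.InvProjector P) (t : ℝ) (ω : Ω) :
    P ω * S.Φ t (S.θ (-t) ω) = S.Φ t (S.θ (-t) ω) * P (S.θ (-t) ω) := by
  have h := hP.2.2 t (S.θ (-t) ω); rwa [theta_inv'] at h

lemma eq_zero_of_norm_le_exp {v : E} {C c : ℝ} (hc : c < 0)
    (h : ∀ n : ℕ, ‖v‖ ≤ C * Real.exp (c * n)) : v = 0 := by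
  have hp : Filter.Tendsto (fun n : ℕ => (Real.exp c) ^ n) atTop (nhds 0) :=
    tendsto_pow_atTop_nhds_zero_of_lt_one (le_of_lt (Real.exp_pos c))
      (by rwa [Real.exp_lt_one_iff])
  have h1 : Filter.Tendsto (fun n : ℕ => C * Real.exp (c * n)) atTop (nhds 0) := by
    have h2 := hp.const_mul C
    rw [mul_zero] at h2
    refine h2.congr fun n => ?_
    rw [mul_comm c (n : ℝ), Real.exp_nat_mul]
  have h2 : ‖v‖ ≤ 0 := ge_of_tendsto h1 (Filter.Eventually.of_forall h)
  exact norm_le_zero_iff.mp h2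

lemma ed_compare {γ₁ γ₂ : ℝ} {P Q : Ω → E →L[ℝ] E}
    (hγ : γ₁ ≤ γ₂) (h₁ : S.IsED γ₁ P) (h₂ : S.IsED γ₂ Q) :
    ∀ᵐ ω ∂ℙ, Q ω * P ω = P ω ∧ P ω * Q ω = P ω := by
  obtain ⟨hPproj, a₁, ha₁, K₁, hK₁, hb₁⟩ := h₁
  obtain ⟨hQproj, a₂, ha₂, K₂, hK₂, hb₂⟩ := h₂
  filter_upwards [hb₁, hb₂, ae_shift S hb₁, ae_shift S hb₂] with ω hω₁ hω₂ hs₁ hs₂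
  set c : ℝ := (γ₁ - a₁) - (γ₂ + a₂) with hc
  have hcneg : c < 0 := by rw [hc]; linarith
  have claimA : (1 - Q ω) * P ω = 0 := by
    apply ContinuousLinearMap.ext
    intro x
    rw [ContinuousLinearMap.zero_apply]
    apply eq_zero_of_norm_le_exp (C := K₂ * (K₁ * ‖x‖)) hcneg
    intro n
    set t : ℝ := (n : ℝ) with ht
    have hcast : ((n : ℚ) : ℝ) = t := by push_cast; rfl
    have hfact : (1 - Q ω) * P ω
        = (S.Φ (-t) (S.θ t ω) * (1 - Q (S.θ t ω))) * (S.Φ t ω * P ω) := by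
      calc (1 - Q ω) * P ω
          = (1 - Q ω) * ((S.Φ (-t) (S.θ t ω) * S.Φ t ω) * P ω) := by
            rw [Phi_inv_left, one_mul]
        _ = ((1 - Q ω) * S.Φ (-t) (S.θ t ω)) * (S.Φ t ω * P ω) := by
            simp only [mul_assoc]
        _ = (S.Φ (-t) (S.θ t ω) * (1 - Q (S.θ t ω))) * (S.Φ t ω * P ω) := by
            rw [invProj_comm' S hQproj]
    have hA : ‖S.Φ (-t) (S.θ t ω) * (1 - Q (S.θ t ω))‖ ≤ K₂ * Real.exp ((γ₂ + a₂) * (-t)) := by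
      have h := (hs₂ (n : ℚ)).2 (-t) (by simp [ht])
      rwa [hcast] at h
    have hB : ‖S.Φ t ω * P ω‖ ≤ K₁ * Real.exp ((γ₁ - a₁) * t) := hω₁.1 t (Nat.cast_nonneg n)
    have hKB : (0:ℝ) ≤ K₂ * Real.exp ((γ₂ + a₂) * (-t)) := le_trans (norm_nonneg _) hA
    rw [hfact]
    calc ‖((S.Φ (-t) (S.θ t ω) * (1 - Q (S.θ t ω))) * (S.Φ t ω * P ω)) x‖
        ≤ ‖(S.Φ (-t) (S.θ t ω) * (1 - Q (S.θ t ω))) * (S.Φ t ω * P ω)‖ * ‖x‖ :=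
          ContinuousLinearMap.le_opNorm _ x
      _ ≤ (‖S.Φ (-t) (S.θ t ω) * (1 - Q (S.θ t ω))‖ * ‖S.Φ t ω * P ω‖) * ‖x‖ := by
          gcongr
          exact norm_mul_le _ _
      _ ≤ ((K₂ * Real.exp ((γ₂ + a₂) * (-t))) * (K₁ * Real.exp ((γ₁ - a₁) * t))) * ‖x‖ := by
          gcongr
      _ = (K₂ * (K₁ * ‖x‖)) * (Real.exp ((γ₂ + a₂) * (-t)) * Real.exp ((γ₁ - a₁) * t)) := by
          ring
      _ = (K₂ * (K₁ * ‖x‖)) * Real.exp (c * t) := by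
          rw [← Real.exp_add]; congr 1; rw [hc]; ring
  have claimB : P ω * (1 - Q ω) = 0 := by
    apply ContinuousLinearMap.ext
    intro x
    rw [ContinuousLinearMap.zero_apply]
    apply eq_zero_of_norm_le_exp (C := K₁ * (K₂ * ‖x‖)) hcneg
    intro n
    set t : ℝ := (n : ℝ) with ht
    have hcast : ((-(n : ℚ) : ℚ) : ℝ) = -t := by push_cast; rfl
    have hfact : P ω * (1 - Q ω)
        = (S.Φ t (S.θ (-t) ω) * P (S.θ (-t) ω)) * (S.Φ (-t) ω * (1 - Q ω)) := by
      calc P ω * (1 - Q ω)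
          = P ω * ((S.Φ t (S.θ (-t) ω) * S.Φ (-t) ω) * (1 - Q ω)) := by
            rw [Phi_inv_left', one_mul]
        _ = (P ω * S.Φ t (S.θ (-t) ω)) * (S.Φ (-t) ω * (1 - Q ω)) := by
            simp only [mul_assoc]
        _ = (S.Φ t (S.θ (-t) ω) * P (S.θ (-t) ω)) * (S.Φ (-t) ω * (1 - Q ω)) := by
            rw [invProj_comm₂ S hPproj]
    have hA : ‖S.Φ t (S.θ (-t) ω) * P (S.θ (-t) ω)‖ ≤ K₁ * Real.exp ((γ₁ - a₁) * t) := by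
      have h := (hs₁ (-(n : ℚ))).1 t (Nat.cast_nonneg n)
      rwa [hcast] at h
    have hB : ‖S.Φ (-t) ω * (1 - Q ω)‖ ≤ K₂ * Real.exp ((γ₂ + a₂) * (-t)) :=
      hω₂.2 (-t) (by simp [ht])
    have hKA : (0:ℝ) ≤ K₁ * Real.exp ((γ₁ - a₁) * t) := le_trans (norm_nonneg _) hA
    rw [hfact]
    calc ‖((S.Φ t (S.θ (-t) ω) * P (S.θ (-t) ω)) * (S.Φ (-t) ω * (1 - Q ω))) x‖
        ≤ ‖(S.Φ t (S.θ (-t) ω) * P (S.θ (-t) ω)) * (S.Φ (-t) ω * (1 - Q ω))‖ * ‖x‖ :=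
          ContinuousLinearMap.le_opNorm _ x
      _ ≤ (‖S.Φ t (S.θ (-t) ω) * P (S.θ (-t) ω)‖ * ‖S.Φ (-t) ω * (1 - Q ω)‖) * ‖x‖ := by
          gcongr
          exact norm_mul_le _ _
      _ ≤ ((K₁ * Real.exp ((γ₁ - a₁) * t)) * (K₂ * Real.exp ((γ₂ + a₂) * (-t)))) * ‖x‖ := by
          gcongr
      _ = (K₁ * (K₂ * ‖x‖)) * (Real.exp ((γ₁ - a₁) * t) * Real.exp ((γ₂ + a₂) * (-t))) := by
          ring
      _ = (K₁ * (K₂ * ‖x‖)) * Real.exp (c * t) := by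
          rw [← Real.exp_add]; congr 1; rw [hc]; ring
  constructor
  · rw [sub_mul, one_mul, sub_eq_zero] at claimA
    exact claimA.symm
  · rw [mul_sub, mul_one, sub_eq_zero] at claimB
    exact claimB.symm

end Compare
end SpecAux
namespace SpecAux
variable {Ω : Type*} [MeasurableSpace Ω] {ℙ : Measure Ω}

lemma clmRank_zero : clmRank (0 : E →L[ℝ] E) = 0 := by
  have : ((0 : E →L[ℝ] E) : E →ₗ[ℝ] E) = 0 := rfl
  rw [clmRank, this, LinearMap.range_zero, finrank_bot]

lemma clmRank_one : clmRank (1 : E →L[ℝ] E) = d := by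
  have : ((1 : E →L[ℝ] E) : E →ₗ[ℝ] E) = LinearMap.id := rfl
  rw [clmRank, this, LinearMap.range_id, finrank_top, finrank_euclideanSpace]
  simp

section RankFun
variable [IsProbabilityMeasure ℙ] (S : LinRDS ℙ d)

open Classical in
/-- the a.e. rank of the projector of an exponential dichotomy with growth rate `γ`. -/
def edRank (γ : ℝ) : ℕ :=
  if h : ∃ k, ∃ P, S.IsED γ P ∧ ∀ᵐ ω ∂ℙ, clmRank (P ω) = k then h.choose else 0

/-- pointwise rank comparison from the operator identities -/
lemma rank_le_point {p q : E →L[ℝ] E} (h : q * p = p) : clmRank p ≤ clmRank q := by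
  calc clmRank p = clmRank (q * p) := by rw [h]
  _ ≤ clmRank q := clmRank_mul_le_left _ _

lemma edRank_unique {γ : ℝ} {P P' : Ω → E →L[ℝ] E} {k k' : ℕ}
    (h : S.IsED γ P) (h' : S.IsED γ P')
    (hk : ∀ᵐ ω ∂ℙ, clmRank (P ω) = k) (hk' : ∀ᵐ ω ∂ℙ, clmRank (P' ω) = k') : k = k' := by
  have hc1 := ed_compare S le_rfl h h'
  have hc2 := ed_compare S le_rfl h' h
  have : ∀ᵐ ω ∂ℙ, k = k' := by
    filter_upwards [hc1, hc2, hk, hk'] with ω h1 h2 hkω hk'ω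
    have hle : clmRank (P ω) ≤ clmRank (P' ω) := rank_le_point h1.1
    have hge : clmRank (P' ω) ≤ clmRank (P ω) := rank_le_point h2.1
    omega
  exact this.exists.choose_spec

lemma ae_rank_eq_edRank (hErg : S.IsErgodic) {γ : ℝ} {P : Ω → E →L[ℝ] E}
    (h : S.IsED γ P) : ∀ᵐ ω ∂ℙ, clmRank (P ω) = edRank S γ := by
  obtain ⟨k, _, hae⟩ := exists_ae_rank S hErg h.1
  have hex : ∃ k, ∃ P, S.IsED γ P ∧ ∀ᵐ ω ∂ℙ, clmRank (P ω) = k := ⟨k, P, h, hae⟩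
  have hval : edRank S γ = hex.choose := by rw [edRank, dif_pos hex]
  obtain ⟨P', hP', hae'⟩ := hex.choose_spec
  have : k = hex.choose := edRank_unique S h hP' hae hae'
  rw [hval, ← this]
  exact hae

lemma edRank_le (hErg : S.IsErgodic) {γ : ℝ} (h : S.AdmitsED γ) : edRank S γ ≤ d := by
  obtain ⟨P, hP⟩ := h
  obtain ⟨k, hk, hae⟩ := exists_ae_rank S hErg hP.1
  have hae' := ae_rank_eq_edRank S hErg hP
  have : ∀ᵐ ω ∂ℙ, edRank S γ = k := by
    filter_upwards [hae, hae'] with ω h1 h2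
    omega
  have := this.exists.choose_spec
  omega

lemma edRank_mono (hErg : S.IsErgodic) {γ₁ γ₂ : ℝ} (hγ : γ₁ ≤ γ₂)
    (h₁ : S.AdmitsED γ₁) (h₂ : S.AdmitsED γ₂) : edRank S γ₁ ≤ edRank S γ₂ := by
  obtain ⟨P₁, hP₁⟩ := h₁
  obtain ⟨P₂, hP₂⟩ := h₂
  have hc := ed_compare S hγ hP₁ hP₂
  have he₁ := ae_rank_eq_edRank S hErg hP₁
  have he₂ := ae_rank_eq_edRank S hErg hP₂
  have : ∀ᵐ ω ∂ℙ, edRank S γ₁ ≤ edRank S γ₂ := by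
    filter_upwards [hc, he₁, he₂] with ω h1 h2 h3
    have := rank_le_point (p := P₁ ω) (q := P₂ ω) h1.1
    omega
  exact this.exists.choose_spec

/-- if ranks agree, the projectors agree a.e. -/
lemma proj_ae_eq (hErg : S.IsErgodic) {γ₁ γ₂ : ℝ} {P₁ P₂ : Ω → E →L[ℝ] E} (hγ : γ₁ ≤ γ₂)
    (h₁ : S.IsED γ₁ P₁) (h₂ : S.IsED γ₂ P₂) (hr : edRank S γ₁ = edRank S γ₂) :
    ∀ᵐ ω ∂ℙ, P₁ ω = P₂ ω := by
  have hc := ed_compare S hγ h₁ h₂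
  have he₁ := ae_rank_eq_edRank S hErg h₁
  have he₂ := ae_rank_eq_edRank S hErg h₂
  filter_upwards [hc, he₁, he₂] with ω h1 h2 h3
  exact proj_eq_of_rank_eq (h₁.1.2.1 ω) (h₂.1.2.1 ω) h1.1 h1.2 (by omega)

end RankFun
end SpecAux
namespace SpecAux
variable {Ω : Type*} [MeasurableSpace Ω] {ℙ : Measure Ω}

section Bridge
variable [IsProbabilityMeasure ℙ] (S : LinRDS ℙ d)

lemma isED_bridge (hErg : S.IsErgodic) {γ₁ γ₂ γ : ℝ} {P₁ P₂ : Ω → E →L[ℝ] E}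
    (h₁ : S.IsED γ₁ P₁) (h₂ : S.IsED γ₂ P₂) (hγ : γ₁ ≤ γ₂)
    (hr : edRank S γ₁ = edRank S γ₂) (hmem : γ ∈ Set.Icc γ₁ γ₂) : S.IsED γ P₁ := by
  obtain ⟨hmem₁, hmem₂⟩ := hmem
  have hPP := proj_ae_eq S hErg hγ h₁ h₂ hr
  obtain ⟨hP₁proj, a₁, ha₁, K₁, hK₁, hb₁⟩ := h₁
  obtain ⟨hP₂proj, a₂, ha₂, K₂, hK₂, hb₂⟩ := h₂
  set a : ℝ := min (γ - γ₁ + a₁) (γ₂ - γ + a₂) with hadef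
  have hapos : 0 < a := lt_min (by linarith) (by linarith)
  have hK₁pos : (0:ℝ) < K₁ := lt_of_lt_of_le one_pos hK₁
  have hK₂pos : (0:ℝ) < K₂ := lt_of_lt_of_le one_pos hK₂
  refine ⟨hP₁proj, a, hapos, max K₁ K₂, le_trans hK₁ (le_max_left _ _), ?_⟩
  filter_upwards [hb₁, hb₂, hPP] with ω h1 h2 h3
  constructor
  · intro t ht
    refine le_trans (h1.1 t ht) ?_
    have hax : (γ₁ - a₁) * t ≤ (γ - a) * t := by
      apply mul_le_mul_of_nonneg_right _ ht
      have := min_le_left (γ - γ₁ + a₁) (γ₂ - γ + a₂)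
      rw [hadef]; linarith
    exact mul_le_mul (le_max_left _ _) (Real.exp_le_exp.mpr hax) (Real.exp_pos _).le
      (le_trans hK₁pos.le (le_max_left _ _))
  · intro t ht
    rw [h3]
    refine le_trans (h2.2 t ht) ?_
    have hax : (γ₂ + a₂) * t ≤ (γ + a) * t := by
      apply mul_le_mul_of_nonpos_right _ ht
      have := min_le_right (γ - γ₁ + a₁) (γ₂ - γ + a₂)
      rw [hadef]; linarith
    exact mul_le_mul (le_max_right _ _) (Real.exp_le_exp.mpr hax) (Real.exp_pos _).le
      (le_trans hK₂pos.le (le_max_right _ _))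

lemma isED_shift {γ : ℝ} {P : Ω → E →L[ℝ] E} (h : S.IsED γ P) :
    ∃ ε > (0:ℝ), ∀ γ' : ℝ, |γ' - γ| < ε → S.IsED γ' P := by
  obtain ⟨hproj, a, ha, K, hK, hb⟩ := h
  have hKpos : (0:ℝ) < K := lt_of_lt_of_le one_pos hK
  refine ⟨a, ha, fun γ' hγ' => ⟨hproj, a - |γ' - γ|, by linarith, K, hK, ?_⟩⟩
  filter_upwards [hb] with ω hω
  constructor
  · intro t ht
    refine le_trans (hω.1 t ht) ?_
    have hax : (γ - a) * t ≤ (γ' - (a - |γ' - γ|)) * t := by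
      apply mul_le_mul_of_nonneg_right _ ht
      have h1 : γ - γ' ≤ |γ' - γ| := by rw [abs_sub_comm]; exact le_abs_self _
      linarith
    exact mul_le_mul_of_nonneg_left (Real.exp_le_exp.mpr hax) hKpos.le
  · intro t ht
    refine le_trans (hω.2 t ht) ?_
    have hax : (γ + a) * t ≤ (γ' + (a - |γ' - γ|)) * t := by
      apply mul_le_mul_of_nonpos_right _ ht
      have h1 : γ' - γ ≤ |γ' - γ| := le_abs_self _
      linarith
    exact mul_le_mul_of_nonneg_left (Real.exp_le_exp.mpr hax) hKpos.le

lemma isED_zero_down {γ γ' : ℝ} {P : Ω → E →L[ℝ] E} (h : S.IsED γ P)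
    (h0 : ∀ᵐ ω ∂ℙ, P ω = 0) (hγ' : γ' ≤ γ) : S.IsED γ' P := by
  obtain ⟨hproj, a, ha, K, hK, hb⟩ := h
  have hKpos : (0:ℝ) < K := lt_of_lt_of_le one_pos hK
  refine ⟨hproj, a, ha, K, hK, ?_⟩
  filter_upwards [hb, h0] with ω hω h0ω
  constructor
  · intro t ht
    rw [h0ω, mul_zero, norm_zero]
    positivity
  · intro t ht
    refine le_trans (hω.2 t ht) ?_
    have hax : (γ + a) * t ≤ (γ' + a) * t := mul_le_mul_of_nonpos_right (by linarith) ht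
    exact mul_le_mul_of_nonneg_left (Real.exp_le_exp.mpr hax) hKpos.le

lemma isED_one_up {γ γ' : ℝ} {P : Ω → E →L[ℝ] E} (h : S.IsED γ P)
    (h1 : ∀ᵐ ω ∂ℙ, P ω = 1) (hγ' : γ ≤ γ') : S.IsED γ' P := by
  obtain ⟨hproj, a, ha, K, hK, hb⟩ := h
  have hKpos : (0:ℝ) < K := lt_of_lt_of_le one_pos hK
  refine ⟨hproj, a, ha, K, hK, ?_⟩
  filter_upwards [hb, h1] with ω hω h1ω
  constructor
  · intro t ht
    refine le_trans (hω.1 t ht) ?_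
    have hax : (γ - a) * t ≤ (γ' - a) * t := mul_le_mul_of_nonneg_right (by linarith) ht
    exact mul_le_mul_of_nonneg_left (Real.exp_le_exp.mpr hax) hKpos.le
  · intro t ht
    rw [h1ω, sub_self, mul_zero, norm_zero]
    positivity

lemma admitsEDE_coe (g : ℝ) : S.AdmitsEDE (g : EReal) ↔ S.AdmitsED g := by
  constructor
  · rintro (⟨g', hg', h⟩ | ⟨h, -⟩ | ⟨h, -⟩)
    · rwa [show g = g' from by exact_mod_cast hg']
    · exact absurd h (EReal.coe_ne_top g)
    · exact absurd h (EReal.coe_ne_bot g)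
  · intro h
    exact Or.inl ⟨g, rfl, h⟩

lemma admitsEDE_bot :
    S.AdmitsEDE (⊥ : EReal) ↔ ∃ g, ∃ P, S.IsED g P ∧ ∀ᵐ ω ∂ℙ, P ω = 0 := by
  constructor
  · rintro (⟨g', hg', -⟩ | ⟨h, -⟩ | ⟨-, h⟩)
    · exact absurd hg'.symm (EReal.coe_ne_bot g')
    · exact absurd h (by simp)
    · exact h
  · intro h
    exact Or.inr (Or.inr ⟨rfl, h⟩)

lemma admitsEDE_top :
    S.AdmitsEDE (⊤ : EReal) ↔ ∃ g, ∃ P, S.IsED g P ∧ ∀ᵐ ω ∂ℙ, P ω = 1 := by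
  constructor
  · rintro (⟨g', hg', -⟩ | ⟨-, h⟩ | ⟨h, -⟩)
    · exact absurd hg'.symm (EReal.coe_ne_top g')
    · exact h
    · exact absurd h (by simp)
  · intro h
    exact Or.inr (Or.inl ⟨rfl, h⟩)

lemma bot_spec (hErg : S.IsErgodic) :
    (∃ g, ∃ P, S.IsED g P ∧ ∀ᵐ ω ∂ℙ, P ω = 0)
      ↔ ∃ g, S.AdmitsED g ∧ edRank S g = 0 := by
  constructor
  · rintro ⟨g, P, h, h0⟩
    refine ⟨g, ⟨P, h⟩, ?_⟩
    have hae := ae_rank_eq_edRank S hErg h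
    have hfin : ∀ᵐ ω ∂ℙ, edRank S g = 0 := by
      filter_upwards [hae, h0] with ω hh1 hh2
      rw [← hh1, hh2, clmRank_zero]
    exact hfin.exists.choose_spec
  · rintro ⟨g, ⟨P, h⟩, hr⟩
    refine ⟨g, P, h, ?_⟩
    have hae := ae_rank_eq_edRank S hErg h
    filter_upwards [hae] with ω hh1
    exact proj_zero_of_rank_zero (by rw [hh1, hr])

lemma top_spec (hErg : S.IsErgodic) :
    (∃ g, ∃ P, S.IsED g P ∧ ∀ᵐ ω ∂ℙ, P ω = 1)
      ↔ ∃ g, S.AdmitsED g ∧ edRank S g = d := by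
  constructor
  · rintro ⟨g, P, h, h0⟩
    refine ⟨g, ⟨P, h⟩, ?_⟩
    have hae := ae_rank_eq_edRank S hErg h
    have hfin : ∀ᵐ ω ∂ℙ, edRank S g = d := by
      filter_upwards [hae, h0] with ω hh1 hh2
      rw [← hh1, hh2, clmRank_one]
    exact hfin.exists.choose_spec
  · rintro ⟨g, ⟨P, h⟩, hr⟩
    refine ⟨g, P, h, ?_⟩
    have hae := ae_rank_eq_edRank S hErg h
    filter_upwards [hae] with ω hh1
    exact proj_one_of_rank_d (h.1.2.1 ω) (by rw [hh1, hr])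

end Bridge
end SpecAux
namespace SpecAux
open Set

theorem interval_decomp (d : ℕ) (hd : 0 < d) (ρ : Set ℝ) (r : ℝ → ℕ)
    (Hd : ∀ γ ∈ ρ, r γ ≤ d)
    (Hmono : ∀ γ₁ γ₂, γ₁ ∈ ρ → γ₂ ∈ ρ → γ₁ ≤ γ₂ → r γ₁ ≤ r γ₂)
    (Hbridge : ∀ γ₁ γ₂, γ₁ ∈ ρ → γ₂ ∈ ρ → γ₁ ≤ γ₂ → r γ₁ = r γ₂ → Set.Icc γ₁ γ₂ ⊆ ρ)
    (Hopen : ∀ γ ∈ ρ, ∃ ε > (0:ℝ), ∀ γ', |γ' - γ| < ε → γ' ∈ ρ ∧ r γ' = r γ)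
    (H0 : ∀ γ ∈ ρ, r γ = 0 → ∀ γ' ≤ γ, γ' ∈ ρ ∧ r γ' = 0)
    (H1 : ∀ γ ∈ ρ, r γ = d → ∀ γ', γ ≤ γ' → γ' ∈ ρ ∧ r γ' = d)
    (Sp : Set EReal)
    (HSreal : ∀ g : ℝ, (g : EReal) ∈ Sp ↔ g ∉ ρ)
    (HSbot : (⊥ : EReal) ∈ Sp ↔ ¬∃ γ ∈ ρ, r γ = 0)
    (HStop : (⊤ : EReal) ∈ Sp ↔ ¬∃ γ ∈ ρ, r γ = d) :
    ∃ n : ℕ, 1 ≤ n ∧ n ≤ d ∧ ∃ a b : Fin n → EReal,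
      (∀ i, a i ≤ b i) ∧ (∀ i j, i < j → b i < a j) ∧
      Sp = ⋃ i, Set.Icc (a i) (b i) := by
  classical
  set ρk : ℕ → Set ℝ := fun k => {γ | γ ∈ ρ ∧ r γ = k} with hρk
  set K : Finset ℕ := (Finset.range (d + 1)).filter (fun k => (ρk k).Nonempty) with hK
  set m : ℕ := K.card with hm
  have hKiff : ∀ k, k ∈ K ↔ (k ≤ d ∧ (ρk k).Nonempty) := by
    intro k
    simp only [hK, Finset.mem_filter, Finset.mem_range]
    exact ⟨fun ⟨h1, h2⟩ => ⟨by omega, h2⟩, fun ⟨h1, h2⟩ => ⟨by omega, h2⟩⟩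
  have hmd1 : m ≤ d + 1 := by
    rw [hm]
    calc K.card ≤ (Finset.range (d+1)).card := Finset.card_le_card (Finset.filter_subset _ _)
    _ = d + 1 := Finset.card_range _
  rcases Nat.eq_zero_or_pos m with hm0 | hmpos
  · -- empty resolvent: the spectrum is everything
    have hρe : ρ = ∅ := by
      by_contra hne
      obtain ⟨γ, hγ⟩ := Set.nonempty_iff_ne_empty.mpr hne
      have hkK : r γ ∈ K := (hKiff _).mpr ⟨Hd γ hγ, ⟨γ, hγ, rfl⟩⟩
      have : 0 < K.card := Finset.card_pos.mpr ⟨_, hkK⟩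
      omega
    have hSp : Sp = Set.univ := by
      ext x
      simp only [Set.mem_univ, iff_true]
      induction x using EReal.rec with
      | bot => exact HSbot.mpr (by simp [hρe])
      | coe g => exact (HSreal g).mpr (by simp [hρe])
      | top => exact HStop.mpr (by simp [hρe])
    refine ⟨1, le_refl 1, hd, fun _ => ⊥, fun _ => ⊤, fun _ => bot_le, ?_, ?_⟩
    · intro i j hij
      exact absurd hij (by omega)
    · rw [hSp]
      simp only [Set.Icc_bot_top, Set.iUnion_const]
  · -- nonempty resolvent
    set e : Fin m ≃o {x // x ∈ K} := K.orderIsoOfFin rfl with he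
    have hKmem : ∀ i : Fin m, ((e i : ℕ)) ∈ K := fun i => (e i).2
    have hne : ∀ i : Fin m, (ρk ((e i : ℕ))).Nonempty := fun i => ((hKiff _).mp (hKmem i)).2
    set A : Fin m → EReal := fun i => sInf ((fun x : ℝ => (x : EReal)) '' ρk ((e i : ℕ))) with hA
    set B : Fin m → EReal := fun i => sSup ((fun x : ℝ => (x : EReal)) '' ρk ((e i : ℕ))) with hB
    -- the image of each band is an open interval
    have himage : ∀ i : Fin m, (fun x : ℝ => (x : EReal)) '' ρk ((e i : ℕ)) = Ioo (A i) (B i) := by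
      intro i
      apply Set.eq_of_subset_of_subset
      · rintro x ⟨g, hg, rfl⟩
        obtain ⟨ε, hε, hloc⟩ := Hopen g hg.1
        have hg1 : g - ε/2 ∈ ρk ((e i : ℕ)) := by
          obtain ⟨h1, h2⟩ := hloc (g - ε/2) (by rw [abs_of_nonpos (by linarith)]; linarith)
          exact ⟨h1, by rw [h2, hg.2]⟩
        have hg2 : g + ε/2 ∈ ρk ((e i : ℕ)) := by
          obtain ⟨h1, h2⟩ := hloc (g + ε/2) (by rw [abs_of_nonneg (by linarith)]; linarith)
          exact ⟨h1, by rw [h2, hg.2]⟩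
        constructor
        · calc A i ≤ ((g - ε/2 : ℝ) : EReal) := sInf_le ⟨_, hg1, rfl⟩
          _ < (g : EReal) := by exact_mod_cast (by linarith : g - ε/2 < g)
        · calc (g : EReal) < ((g + ε/2 : ℝ) : EReal) := by exact_mod_cast (by linarith : g < g + ε/2)
          _ ≤ B i := le_sSup ⟨_, hg2, rfl⟩
      · rintro y ⟨hy1, hy2⟩
        induction y using EReal.rec with
        | bot => exact absurd hy1 (by simp)
        | top => exact absurd hy2 (by simp)
        | coe g =>
          obtain ⟨z, ⟨g₁, hg₁, rfl⟩, hz⟩ := sInf_lt_iff.mp hy1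
          obtain ⟨w, ⟨g₂, hg₂, rfl⟩, hw⟩ := lt_sSup_iff.mp hy2
          have hz' : ((g₁:ℝ):EReal) < ((g:ℝ):EReal) := hz
          have hw' : ((g:ℝ):EReal) < ((g₂:ℝ):EReal) := hw
          have hg₁g : g₁ < g := by exact_mod_cast hz'
          have hgg₂ : g < g₂ := by exact_mod_cast hw'
          have hmem : g ∈ ρ := Hbridge g₁ g₂ hg₁.1 hg₂.1 (by linarith)
            (by rw [hg₁.2, hg₂.2]) ⟨by linarith, by linarith⟩
          have hr1 : r g₁ ≤ r g := Hmono _ _ hg₁.1 hmem (by linarith)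
          have hr2 : r g ≤ r g₂ := Hmono _ _ hmem hg₂.1 (by linarith)
          refine ⟨g, ⟨hmem, ?_⟩, rfl⟩
          rw [hg₁.2] at hr1
          rw [hg₂.2] at hr2
          omega
    -- strict separation of bands
    have horder : ∀ i j : Fin m, i < j → ∀ x ∈ ρk ((e i : ℕ)), ∀ y ∈ ρk ((e j : ℕ)), x < y := by
      intro i j hij x hx y hy
      have heij : ((e i : ℕ)) < ((e j : ℕ)) := by
        have := e.strictMono hij
        exact_mod_cast this
      by_contra hcon
      push_neg at hcon
      have := Hmono y x hy.1 hx.1 hcon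
      rw [hx.2, hy.2] at this
      omega
    have hBA : ∀ i j : Fin m, i < j → B i ≤ A j := by
      intro i j hij
      apply sSup_le
      rintro z ⟨g₁, hg₁, rfl⟩
      apply le_sInf
      rintro w ⟨g₂, hg₂, rfl⟩
      show ((g₁:ℝ):EReal) ≤ ((g₂:ℝ):EReal)
      exact_mod_cast le_of_lt (horder i j hij g₁ hg₁ g₂ hg₂)
    have hAB : ∀ i : Fin m, A i < B i := by
      intro i
      obtain ⟨g, hg⟩ := hne i
      have : (g : EReal) ∈ Ioo (A i) (B i) := by
        rw [← himage i]; exact ⟨g, hg, rfl⟩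
      exact lt_trans this.1 this.2
    have hAmono : ∀ i j : Fin m, i ≤ j → A i ≤ A j := by
      intro i j hij
      rcases lt_or_eq_of_le hij with h | h
      · exact le_trans (hAB i).le (hBA i j h)
      · rw [h]
    have hBmono : ∀ i j : Fin m, i ≤ j → B i ≤ B j := by
      intro i j hij
      rcases lt_or_eq_of_le hij with h | h
      · exact le_trans (hBA i j h) (hAB j).le
      · rw [h]
    -- characterization of the resolvent
    have hInRho : ∀ g : ℝ, g ∈ ρ ↔ ∃ i : Fin m, (g : EReal) ∈ Ioo (A i) (B i) := by
      intro g
      constructor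
      · intro hg
        have hkK : r g ∈ K := (hKiff _).mpr ⟨Hd g hg, ⟨g, hg, rfl⟩⟩
        refine ⟨e.symm ⟨r g, hkK⟩, ?_⟩
        rw [← himage]
        refine ⟨g, ⟨hg, ?_⟩, rfl⟩
        have : e (e.symm ⟨r g, hkK⟩) = ⟨r g, hkK⟩ := e.apply_symm_apply _
        rw [this]
      · rintro ⟨i, hi⟩
        rw [← himage i] at hi
        obtain ⟨g', hg', hgg⟩ := hi
        have hgg' : ((g':ℝ):EReal) = ((g:ℝ):EReal) := hgg
        have : g' = g := by exact_mod_cast hgg'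
        rw [← this]; exact hg'.1
    -- K endpoint characterizations
    have hbotK : (∃ γ ∈ ρ, r γ = 0) ↔ 0 ∈ K := by
      constructor
      · rintro ⟨γ, hγ, hrγ⟩
        exact (hKiff 0).mpr ⟨Nat.zero_le d, ⟨γ, hγ, hrγ⟩⟩
      · intro h
        obtain ⟨γ, hγ⟩ := ((hKiff 0).mp h).2
        exact ⟨γ, hγ.1, hγ.2⟩
    have htopK : (∃ γ ∈ ρ, r γ = d) ↔ d ∈ K := by
      constructor
      · rintro ⟨γ, hγ, hrγ⟩
        exact (hKiff d).mpr ⟨le_refl d, ⟨γ, hγ, hrγ⟩⟩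
      · intro h
        obtain ⟨γ, hγ⟩ := ((hKiff d).mp h).2
        exact ⟨γ, hγ.1, hγ.2⟩
    -- least and greatest elements of K
    have heLeast : ∀ x : {x // x ∈ K}, e ⟨0, hmpos⟩ ≤ x := by
      intro x
      have : e (e.symm x) = x := e.apply_symm_apply x
      rw [← this]
      exact e.monotone (by simp [Fin.le_def])
    have heGreatest : ∀ x : {x // x ∈ K}, x ≤ e ⟨m - 1, by omega⟩ := by
      intro x
      have : e (e.symm x) = x := e.apply_symm_apply x
      rw [← this]
      apply e.monotone
      rw [Fin.le_def]
      have h := (e.symm x).isLt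
      simp only []
      omega
    -- endpoint degeneration
    have hA0 : 0 ∈ K → A ⟨0, hmpos⟩ = ⊥ := by
      intro h0K
      have he0 : ((e ⟨0, hmpos⟩ : ℕ)) = 0 := by
        have := heLeast ⟨0, h0K⟩
        exact Nat.le_zero.mp this
      obtain ⟨g₀, hg₀⟩ := hne ⟨0, hmpos⟩
      rw [hA]
      rw [sInf_eq_bot]
      intro b hb
      induction b using EReal.rec with
      | bot => exact absurd hb (lt_irrefl _)
      | top => exact ⟨(g₀ : EReal), ⟨g₀, hg₀, rfl⟩, EReal.coe_lt_top g₀⟩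
      | coe c =>
        refine ⟨((min c g₀ - 1 : ℝ) : EReal), ⟨min c g₀ - 1, ?_, rfl⟩, ?_⟩
        · have h := H0 g₀ hg₀.1 (by rw [hg₀.2, he0]) (min c g₀ - 1)
            (by have := min_le_right c g₀; linarith)
          exact ⟨h.1, by rw [h.2, he0]⟩
        · have : min c g₀ - 1 < c := by have := min_le_left c g₀; linarith
          exact_mod_cast this
    have hBlast : d ∈ K → B ⟨m - 1, by omega⟩ = ⊤ := by
      intro hdK
      have held : ((e ⟨m - 1, by omega⟩ : ℕ)) = d := by
        have h1 := heGreatest ⟨d, hdK⟩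
        have h2 : ((e ⟨m - 1, by omega⟩ : ℕ)) ≤ d := ((hKiff _).mp (hKmem _)).1
        have h3 : d ≤ ((e ⟨m - 1, by omega⟩ : ℕ)) := h1
        omega
      obtain ⟨g₀, hg₀⟩ := hne ⟨m - 1, by omega⟩
      rw [hB]
      rw [sSup_eq_top]
      intro b hb
      induction b using EReal.rec with
      | top => exact absurd hb (lt_irrefl _)
      | bot => exact ⟨(g₀ : EReal), ⟨g₀, hg₀, rfl⟩, EReal.bot_lt_coe g₀⟩
      | coe c =>
        refine ⟨((max c g₀ + 1 : ℝ) : EReal), ⟨max c g₀ + 1, ?_, rfl⟩, ?_⟩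
        · have h := H1 g₀ hg₀.1 (by rw [hg₀.2, held]) (max c g₀ + 1)
            (by have := le_max_right c g₀; linarith)
          exact ⟨h.1, by rw [h.2, held]⟩
        · have : c < max c g₀ + 1 := by have := le_max_left c g₀; linarith
          exact_mod_cast this
    -- piece endpoint functions
    set lo : ℕ → EReal := fun j => if j = 0 then ⊥ else if h : j - 1 < m then B ⟨j - 1, h⟩ else ⊤ with hlo
    set hi : ℕ → EReal := fun j => if h : j < m then A ⟨j, h⟩ else ⊤ with hhi
    have hlo0 : lo 0 = ⊥ := by simp [hlo]
    have hloS : ∀ j, ∀ h : j < m, lo (j + 1) = B ⟨j, h⟩ := by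
      intro j h
      simp [hlo, h]
    have hhiA : ∀ j, ∀ h : j < m, hi j = A ⟨j, h⟩ := by
      intro j h; simp [hhi, h]
    have hhim : hi m = ⊤ := by simp [hhi]
    have hlobot : ∀ j, 1 ≤ j → j ≤ m → ⊥ < lo j := by
      intro j h1 h2
      obtain ⟨j', rfl⟩ : ∃ t, j = t + 1 := ⟨j - 1, by omega⟩
      rw [hloS j' (by omega)]
      exact lt_of_le_of_lt bot_le (hAB ⟨j', by omega⟩)
    have hhitop : ∀ j, j < m → hi j < ⊤ := by
      intro j h
      rw [hhiA j h]
      exact lt_of_lt_of_le (hAB ⟨j, h⟩) le_top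
    have hlohi : ∀ j, j ≤ m → lo j ≤ hi j := by
      intro j hj
      rcases Nat.eq_zero_or_pos j with rfl | hj1
      · rw [hlo0]; exact bot_le
      · obtain ⟨j', rfl⟩ : ∃ t, j = t + 1 := ⟨j - 1, by omega⟩
        rw [hloS j' (by omega)]
        by_cases hjm : j' + 1 < m
        · rw [hhiA _ hjm]
          exact hBA ⟨j', by omega⟩ ⟨j' + 1, hjm⟩ (by simp [Fin.lt_def])
        · have hhh : j' + 1 = m := by omega
          have h2 : hi (j' + 1) = ⊤ := by rw [hhh]; exact hhim
          rw [h2]; exact le_top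
    have hlomono : ∀ i j, 1 ≤ i → i ≤ j → j ≤ m → lo i ≤ lo j := by
      intro i j h1 h2 h3
      obtain ⟨i', rfl⟩ : ∃ t, i = t + 1 := ⟨i - 1, by omega⟩
      obtain ⟨j', rfl⟩ : ∃ t, j = t + 1 := ⟨j - 1, by omega⟩
      rw [hloS i' (by omega), hloS j' (by omega)]
      exact hBmono _ _ (by rw [Fin.le_def]; simp; omega)
    have hchain : ∀ i j, i < j → j ≤ m → hi i < lo j := by
      intro i j hij hjm
      have him : i < m := by omega
      calc hi i = A ⟨i, him⟩ := hhiA i him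
      _ < B ⟨i, him⟩ := hAB _
      _ = lo (i + 1) := (hloS i him).symm
      _ ≤ lo j := hlomono (i+1) j (by omega) (by omega) hjm
    -- cover
    have hcover : ∀ x : EReal, (∀ i : Fin m, x ∉ Ioo (A i) (B i)) →
        ∃ j, j ≤ m ∧ x ∈ Icc (lo j) (hi j) := by
      intro x hx
      have h0T : 0 ∈ (Finset.range (m + 1)).filter (fun j => lo j ≤ x) := by
        rw [Finset.mem_filter, Finset.mem_range]
        exact ⟨by omega, by rw [hlo0]; exact bot_le⟩
      have hTne : ((Finset.range (m + 1)).filter (fun j => lo j ≤ x)).Nonempty := ⟨0, h0T⟩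
      obtain ⟨j, hjmem, hjmax⟩ :
          ∃ j, j ∈ (Finset.range (m + 1)).filter (fun j => lo j ≤ x) ∧
            ∀ k ∈ (Finset.range (m + 1)).filter (fun j => lo j ≤ x), k ≤ j :=
        ⟨_, Finset.max'_mem _ hTne, fun k hk => Finset.le_max' _ k hk⟩
      rw [Finset.mem_filter, Finset.mem_range] at hjmem
      refine ⟨j, by omega, hjmem.2, ?_⟩
      by_cases hjm : j < m
      · have hnot : ¬ lo (j + 1) ≤ x := by
          intro hcon
          have hmem : j + 1 ∈ (Finset.range (m + 1)).filter (fun j => lo j ≤ x) := by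
            rw [Finset.mem_filter, Finset.mem_range]
            exact ⟨by omega, hcon⟩
          have := hjmax _ hmem
          omega
        have hxB : x < B ⟨j, hjm⟩ := by
          rw [← hloS j hjm]
          exact lt_of_not_ge hnot
        rw [hhiA j hjm]
        by_contra hcon
        push_neg at hcon
        exact hx ⟨j, hjm⟩ ⟨hcon, hxB⟩
      · have hhh : hi j = ⊤ := by simp [hhi, hjm]
        rw [hhh]; exact le_top
    -- disjointness
    have hdisj : ∀ j, j ≤ m → ∀ x ∈ Icc (lo j) (hi j), ∀ i : Fin m, x ∉ Ioo (A i) (B i) := by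
      intro j hj x hx i hcon
      rcases lt_or_ge (i : ℕ) j with hij | hij
      · have h1 : B i ≤ lo j := by
          obtain ⟨j', rfl⟩ : ∃ t, j = t + 1 := ⟨j - 1, by omega⟩
          rw [hloS j' (by omega)]
          exact hBmono i ⟨j', by omega⟩ (by rw [Fin.le_def]; simp; omega)
        exact absurd (lt_of_lt_of_le hcon.2 (le_trans h1 hx.1)) (lt_irrefl x)
      · have h2 : hi j ≤ A i := by
          have hjm : j < m := lt_of_le_of_lt hij i.isLt
          rw [hhiA j hjm]
          exact hAmono ⟨j, hjm⟩ i (by rw [Fin.le_def]; simpa)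
        exact absurd (lt_of_le_of_lt (le_trans hx.2 h2) hcon.1) (lt_irrefl x)
    -- the list of spectral intervals
    set left : List (EReal × EReal) := if 0 ∈ K then [] else [(lo 0, hi 0)] with hleft
    set mid : List (EReal × EReal) :=
      List.ofFn (fun i : Fin (m - 1) => (lo (i.val + 1), hi (i.val + 1))) with hmid
    set right : List (EReal × EReal) := if d ∈ K then [] else [(lo m, hi m)] with hright
    set l : List (EReal × EReal) := left ++ mid ++ right with hl
    have hform : ∀ p ∈ l, ∃ j, j ≤ m ∧ p = (lo j, hi j) ∧ (j = 0 → 0 ∉ K) ∧ (j = m → d ∉ K) := by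
      intro p hp
      rw [hl] at hp
      rcases List.mem_append.mp hp with hp | hp
      · rcases List.mem_append.mp hp with hp | hp
        · rw [hleft] at hp
          by_cases h0 : 0 ∈ K
          · rw [if_pos h0] at hp; exact absurd hp (List.not_mem_nil)
          · rw [if_neg h0, List.mem_singleton] at hp
            exact ⟨0, by omega, hp, fun _ => h0, fun h0m => absurd h0m.symm (by omega)⟩
        · rw [hmid] at hp
          obtain ⟨i, rfl⟩ := List.mem_ofFn.mp hp
          refine ⟨i.val + 1, by have := i.isLt; omega, rfl, ?_, ?_⟩
          · intro h; exact absurd h (by omega)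
          · intro h; have := i.isLt; omega
      · rw [hright] at hp
        by_cases h1 : d ∈ K
        · rw [if_pos h1] at hp; exact absurd hp (List.not_mem_nil)
        · rw [if_neg h1, List.mem_singleton] at hp
          exact ⟨m, le_refl m, hp, fun h0m => absurd h0m (by omega), fun _ => h1⟩
    have hmem_of : ∀ j, j ≤ m →
        ((j = 0 ∧ 0 ∉ K) ∨ (1 ≤ j ∧ j ≤ m - 1) ∨ (j = m ∧ d ∉ K)) → (lo j, hi j) ∈ l := by
      intro j hjm hcase
      rw [hl]
      rcases hcase with ⟨rfl, h0⟩ | ⟨h1, h2⟩ | ⟨rfl, h1⟩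
      · apply List.mem_append_left
        apply List.mem_append_left
        rw [hleft, if_neg h0]
        exact List.mem_singleton.mpr rfl
      · apply List.mem_append_left
        apply List.mem_append_right
        rw [hmid]
        apply List.mem_ofFn.mpr
        refine ⟨⟨j - 1, by omega⟩, ?_⟩
        have heq : j - 1 + 1 = j := by omega
        simp only [heq]
      · apply List.mem_append_right
        rw [hright, if_neg h1]
        exact List.mem_singleton.mpr rfl
    -- the spectrum equals the union of the pieces
    have hSpl : Sp = ⋃ p ∈ l, Icc p.1 p.2 := by
      ext x
      simp only [Set.mem_iUnion, exists_prop]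
      constructor
      · intro hx
        have hnotIoo : ∀ i : Fin m, x ∉ Ioo (A i) (B i) := by
          intro i hcon
          induction x using EReal.rec with
          | bot => exact absurd hcon.1 (by simp)
          | top => exact absurd hcon.2 (by simp)
          | coe g => exact ((HSreal g).mp hx) ((hInRho g).mpr ⟨i, hcon⟩)
        obtain ⟨j, hjm, hjx⟩ := hcover x hnotIoo
        rcases Nat.eq_zero_or_pos j with rfl | hj1
        · by_cases h0K : 0 ∈ K
          · exfalso
            have hhb : hi 0 = ⊥ := by rw [hhiA 0 hmpos, hA0 h0K]
            have hxbot : x = ⊥ := le_bot_iff.mp (hhb ▸ hjx.2)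
            rw [hxbot] at hx
            exact (HSbot.mp hx) (hbotK.mpr h0K)
          · exact ⟨(lo 0, hi 0), hmem_of 0 (by omega) (Or.inl ⟨rfl, h0K⟩), hjx⟩
        · by_cases hjmm : j = m
          · subst hjmm
            by_cases hdK : d ∈ K
            · exfalso
              have hlt : lo m = ⊤ := by
                obtain ⟨j', hj'⟩ : ∃ t, m = t + 1 := ⟨m - 1, by omega⟩
                rw [hj', hloS j' (by omega)]
                have : (⟨j', by omega⟩ : Fin m) = ⟨m - 1, by omega⟩ := by
                  apply Fin.ext; simp; omega
                rw [this]
                exact hBlast hdK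
              have hxtop : x = ⊤ := top_le_iff.mp (hlt ▸ hjx.1)
              rw [hxtop] at hx
              exact (HStop.mp hx) (htopK.mpr hdK)
            · exact ⟨(lo m, hi m), hmem_of m le_rfl (Or.inr (Or.inr ⟨rfl, hdK⟩)), hjx⟩
          · exact ⟨(lo j, hi j), hmem_of j hjm (Or.inr (Or.inl ⟨by omega, by omega⟩)), hjx⟩
      · rintro ⟨p, hpl, hpx⟩
        obtain ⟨j, hjm, rfl, hj0, hjmK⟩ := hform p hpl
        have hnot := hdisj j hjm x hpx
        induction x using EReal.rec with
        | coe g =>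
          rw [HSreal g]
          intro hgρ
          obtain ⟨i, hi'⟩ := (hInRho g).mp hgρ
          exact hnot i hi'
        | bot =>
          rw [HSbot]
          have hj00 : j = 0 := by
            by_contra hne
            have := hlobot j (by omega) hjm
            exact absurd (lt_of_lt_of_le this hpx.1) (lt_irrefl _)
          rw [hbotK]
          exact hj0 hj00
        | top =>
          rw [HStop, htopK]
          have hjm' : j = m := by
            by_contra hne
            have := hhitop j (by omega)
            exact absurd (lt_of_le_of_lt hpx.2 this) (lt_irrefl _)
          exact hjmK hjm'
    -- pairwise ordering
    have hleftpair : left.Pairwise (fun p q => p.2 < q.1) := by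
      rw [hleft]; split
      · exact List.Pairwise.nil
      · exact List.pairwise_singleton _ _
    have hrightpair : right.Pairwise (fun p q => p.2 < q.1) := by
      rw [hright]; split
      · exact List.Pairwise.nil
      · exact List.pairwise_singleton _ _
    have hmidpair : mid.Pairwise (fun p q => p.2 < q.1) := by
      rw [hmid, List.pairwise_ofFn]
      intro i j hij
      exact hchain (i.val + 1) (j.val + 1) (by rw [Fin.lt_def] at hij; omega)
        (by have := j.isLt; omega)
    have hcross1 : ∀ p ∈ left, ∀ q ∈ mid, p.2 < q.1 := by
      intro p hp q hq
      rw [hleft] at hp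
      by_cases h0K : 0 ∈ K
      · rw [if_pos h0K] at hp; exact absurd hp (List.not_mem_nil)
      · rw [if_neg h0K, List.mem_singleton] at hp
        rw [hmid] at hq
        obtain ⟨i, rfl⟩ := List.mem_ofFn.mp hq
        rw [hp]
        exact hchain 0 (i.val + 1) (by omega) (by have := i.isLt; omega)
    have hcross2 : ∀ p ∈ left, ∀ q ∈ right, p.2 < q.1 := by
      intro p hp q hq
      rw [hleft] at hp
      rw [hright] at hq
      by_cases h0K : 0 ∈ K
      · rw [if_pos h0K] at hp; exact absurd hp (List.not_mem_nil)
      by_cases hdK : d ∈ K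
      · rw [if_pos hdK] at hq; exact absurd hq (List.not_mem_nil)
      rw [if_neg h0K, List.mem_singleton] at hp
      rw [if_neg hdK, List.mem_singleton] at hq
      rw [hp, hq]
      exact hchain 0 m hmpos le_rfl
    have hcross3 : ∀ p ∈ mid, ∀ q ∈ right, p.2 < q.1 := by
      intro p hp q hq
      rw [hmid] at hp
      rw [hright] at hq
      obtain ⟨i, rfl⟩ := List.mem_ofFn.mp hp
      by_cases hdK : d ∈ K
      · rw [if_pos hdK] at hq; exact absurd hq (List.not_mem_nil)
      rw [if_neg hdK, List.mem_singleton] at hq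
      rw [hq]
      exact hchain (i.val + 1) m (by have := i.isLt; omega) le_rfl
    have hpair : l.Pairwise (fun p q => p.2 < q.1) := by
      rw [hl, List.pairwise_append]
      refine ⟨?_, hrightpair, ?_⟩
      · rw [List.pairwise_append]
        exact ⟨hleftpair, hmidpair, hcross1⟩
      · intro a ha b hb
        rcases List.mem_append.mp ha with h | h
        · exact hcross2 a h b hb
        · exact hcross3 a h b hb
    have hlb : ∀ p ∈ l, p.1 ≤ p.2 := by
      intro p hp
      obtain ⟨j, hjm, rfl, -, -⟩ := hform p hp
      exact hlohi j hjm
    -- cardinality bookkeeping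
    have hlen : l.length = (if 0 ∈ K then 0 else 1) + (m - 1) + (if d ∈ K then 0 else 1) := by
      rw [hl]
      by_cases h0K : 0 ∈ K <;> by_cases hdK : d ∈ K <;>
        simp [hleft, hright, hmid, h0K, hdK] <;> omega
    have hcard0 : 0 ∈ K → d ∈ K → 2 ≤ m := by
      intro h0 h1
      rw [hm]
      exact Finset.one_lt_card.mpr ⟨0, h0, d, h1, by omega⟩
    have hcard1 : 0 ∉ K → m ≤ d := by
      intro h0
      have hsub : K ⊆ (Finset.range (d + 1)).erase 0 := by
        intro k hk
        rw [Finset.mem_erase]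
        exact ⟨fun h => h0 (h ▸ hk), (Finset.filter_subset _ _) hk⟩
      calc m ≤ ((Finset.range (d + 1)).erase 0).card := Finset.card_le_card hsub
      _ = d := by
          rw [Finset.card_erase_of_mem (by simp), Finset.card_range]
          omega
    have hcard2 : d ∉ K → m ≤ d := by
      intro h1
      have hsub : K ⊆ (Finset.range (d + 1)).erase d := by
        intro k hk
        rw [Finset.mem_erase]
        exact ⟨fun h => h1 (h ▸ hk), (Finset.filter_subset _ _) hk⟩
      calc m ≤ ((Finset.range (d + 1)).erase d).card := Finset.card_le_card hsub
      _ = d := by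
          rw [Finset.card_erase_of_mem (by simp), Finset.card_range]
          omega
    have hcard3 : 0 ∉ K → d ∉ K → m ≤ d - 1 := by
      intro h0 h1
      have hsub : K ⊆ ((Finset.range (d + 1)).erase 0).erase d := by
        intro k hk
        rw [Finset.mem_erase, Finset.mem_erase]
        exact ⟨fun h => h1 (h ▸ hk), fun h => h0 (h ▸ hk), (Finset.filter_subset _ _) hk⟩
      calc m ≤ (((Finset.range (d + 1)).erase 0).erase d).card := Finset.card_le_card hsub
      _ = d - 1 := by
          have hmem : d ∈ (Finset.range (d + 1)).erase 0 := by
            rw [Finset.mem_erase]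
            exact ⟨by omega, by simp⟩
          rw [Finset.card_erase_of_mem hmem, Finset.card_erase_of_mem (by simp),
            Finset.card_range]
          omega
    -- final assembly
    refine ⟨l.length, ?_, ?_, fun i => (l.get i).1, fun i => (l.get i).2, ?_, ?_, ?_⟩
    · rw [hlen]
      by_cases h0K : 0 ∈ K <;> by_cases hdK : d ∈ K
      · have := hcard0 h0K hdK
        rw [if_pos h0K, if_pos hdK]; omega
      · rw [if_pos h0K, if_neg hdK]; omega
      · rw [if_neg h0K, if_pos hdK]; omega
      · rw [if_neg h0K, if_neg hdK]; omega
    · rw [hlen]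
      by_cases h0K : 0 ∈ K <;> by_cases hdK : d ∈ K
      · rw [if_pos h0K, if_pos hdK]; omega
      · have := hcard2 hdK
        rw [if_pos h0K, if_neg hdK]; omega
      · have := hcard1 h0K
        rw [if_neg h0K, if_pos hdK]; omega
      · have := hcard3 h0K hdK
        rw [if_neg h0K, if_neg hdK]; omega
    · intro i
      exact hlb _ (List.get_mem l i)
    · intro i j hij
      exact List.pairwise_iff_get.mp hpair i j hij
    · rw [hSpl]
      ext x
      simp only [Set.mem_iUnion, exists_prop]
      constructor
      · rintro ⟨p, hpl, hx⟩
        obtain ⟨i, rfl⟩ := List.mem_iff_get.mp hpl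
        exact ⟨i, hx⟩
      · rintro ⟨i, hx⟩
        exact ⟨l.get i, List.get_mem l i, hx⟩

end SpecAux

/-- **Spectral Theorem.** The dichotomy spectrum of an ergodic linear random
dynamical system on `ℝ^d` (with `d ≥ 1`) is a union of `n` closed intervals of the extended
real line, `Σ = [a 0, b 0] ∪ … ∪ [a (n-1), b (n-1)]`, with `1 ≤ n ≤ d` and
`a 0 ≤ b 0 < a 1 ≤ b 1 < … < a (n-1) ≤ b (n-1)`. -/
theorem dichotomy_spectral_theorem
    {Ω : Type*} [MeasurableSpace Ω] {ℙ : Measure Ω} [IsProbabilityMeasure ℙ] {d : ℕ}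
    (hd : 0 < d) (S : LinRDS ℙ d) (hErg : S.IsErgodic) :
    ∃ n : ℕ, 1 ≤ n ∧ n ≤ d ∧
      ∃ a b : Fin n → EReal,
        (∀ i, a i ≤ b i) ∧
        (∀ i j, i < j → b i < a j) ∧
        S.spectrum = ⋃ i, Set.Icc (a i) (b i) := by
  classical
  set ρ : Set ℝ := {γ | S.AdmitsED γ} with hρ
  have hrank_eq2 : ∀ (γ γ' : ℝ) (P : Ω → EuclideanSpace ℝ (Fin d) →L[ℝ] EuclideanSpace ℝ (Fin d)),
      S.IsED γ P → S.IsED γ' P → SpecAux.edRank S γ = SpecAux.edRank S γ' := by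
    intro γ γ' P h h'
    have h1 := SpecAux.ae_rank_eq_edRank S hErg h
    have h2 := SpecAux.ae_rank_eq_edRank S hErg h'
    have h3 : ∀ᵐ ω ∂ℙ, SpecAux.edRank S γ = SpecAux.edRank S γ' := by
      filter_upwards [h1, h2] with ω e1 e2
      omega
    exact h3.exists.choose_spec
  have hHbridge : ∀ γ₁ γ₂, γ₁ ∈ ρ → γ₂ ∈ ρ → γ₁ ≤ γ₂ →
      SpecAux.edRank S γ₁ = SpecAux.edRank S γ₂ → Set.Icc γ₁ γ₂ ⊆ ρ := by
    intro γ₁ γ₂ h₁ h₂ hle hr γ hγ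
    obtain ⟨P₁, hP₁⟩ := h₁
    obtain ⟨P₂, hP₂⟩ := h₂
    exact ⟨P₁, SpecAux.isED_bridge S hErg hP₁ hP₂ hle hr hγ⟩
  have hHopen : ∀ γ ∈ ρ, ∃ ε > (0:ℝ), ∀ γ', |γ' - γ| < ε →
      γ' ∈ ρ ∧ SpecAux.edRank S γ' = SpecAux.edRank S γ := by
    intro γ hγ
    obtain ⟨P, hP⟩ := hγ
    obtain ⟨ε, hε, hloc⟩ := SpecAux.isED_shift S hP
    exact ⟨ε, hε, fun γ' hγ' =>
      ⟨⟨P, hloc γ' hγ'⟩, hrank_eq2 γ' γ P (hloc γ' hγ') hP⟩⟩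
  have hH0 : ∀ γ ∈ ρ, SpecAux.edRank S γ = 0 → ∀ γ' ≤ γ,
      γ' ∈ ρ ∧ SpecAux.edRank S γ' = 0 := by
    intro γ hγ hr0 γ' hγ'
    obtain ⟨P, hP⟩ := hγ
    have hae := SpecAux.ae_rank_eq_edRank S hErg hP
    have h0 : ∀ᵐ ω ∂ℙ, P ω = 0 := by
      filter_upwards [hae] with ω h1
      exact SpecAux.proj_zero_of_rank_zero (by rw [h1, hr0])
    have hED' := SpecAux.isED_zero_down S hP h0 hγ'
    refine ⟨⟨P, hED'⟩, ?_⟩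
    have hae' := SpecAux.ae_rank_eq_edRank S hErg hED'
    have hconst : ∀ᵐ ω ∂ℙ, SpecAux.edRank S γ' = 0 := by
      filter_upwards [hae', h0] with ω h1 h2
      rw [← h1, h2, SpecAux.clmRank_zero]
    exact hconst.exists.choose_spec
  have hH1 : ∀ γ ∈ ρ, SpecAux.edRank S γ = d → ∀ γ', γ ≤ γ' →
      γ' ∈ ρ ∧ SpecAux.edRank S γ' = d := by
    intro γ hγ hr0 γ' hγ'
    obtain ⟨P, hP⟩ := hγ
    have hae := SpecAux.ae_rank_eq_edRank S hErg hP
    have h0 : ∀ᵐ ω ∂ℙ, P ω = 1 := by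
      filter_upwards [hae] with ω h1
      exact SpecAux.proj_one_of_rank_d (hP.1.2.1 ω) (by rw [h1, hr0])
    have hED' := SpecAux.isED_one_up S hP h0 hγ'
    refine ⟨⟨P, hED'⟩, ?_⟩
    have hae' := SpecAux.ae_rank_eq_edRank S hErg hED'
    have hconst : ∀ᵐ ω ∂ℙ, SpecAux.edRank S γ' = d := by
      filter_upwards [hae', h0] with ω h1 h2
      rw [← h1, h2, SpecAux.clmRank_one]
    exact hconst.exists.choose_spec
  have hreal : ∀ g : ℝ, (g : EReal) ∈ S.spectrum ↔ g ∉ ρ := by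
    intro g
    rw [LinRDS.spectrum, Set.mem_setOf_eq, SpecAux.admitsEDE_coe]
    exact Iff.rfl
  have hbot : (⊥ : EReal) ∈ S.spectrum ↔ ¬∃ γ ∈ ρ, SpecAux.edRank S γ = 0 := by
    rw [LinRDS.spectrum, Set.mem_setOf_eq, SpecAux.admitsEDE_bot, SpecAux.bot_spec S hErg]
    exact Iff.rfl
  have htop : (⊤ : EReal) ∈ S.spectrum ↔ ¬∃ γ ∈ ρ, SpecAux.edRank S γ = d := by
    rw [LinRDS.spectrum, Set.mem_setOf_eq, SpecAux.admitsEDE_top, SpecAux.top_spec S hErg]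
    exact Iff.rfl
  exact SpecAux.interval_decomp d hd ρ (SpecAux.edRank S)
    (fun γ hγ => SpecAux.edRank_le S hErg hγ)
    (fun γ₁ γ₂ h1 h2 hle => SpecAux.edRank_mono S hErg hle h1 h2)
    hHbridge hHopen hH0 hH1 S.spectrum hreal hbot htop

end
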